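/- Let α be a finite type with decidable equality, let n : ℕ, let x, y : Fin n → α with E(x) ≠ E(y), and let i : Fin n be the least index with E(x) i ≠ E(y) i. Suppose there exists d : Fin n such that x and y p-match after discarding {d}. Then d = i, or prev_x(i) exists and d = prev_x(i), or prev_y(i) exists and d = prev_y(i). -/

import Mathlib

/-- The predecessor occurrence of position `i` in `x`: the largest `j < i`
with `x j = x i`, as an element of `WithBot (Fin n)` (`⊥` when none exists). -/
def prevOcc {α : Type*} [DecidableEq α] {n : ℕ} (x : Fin n → α) (i : Fin n) :
    WithBot (Fin n) :=
  (Finset.univ.filter (fun j : Fin n => j < i ∧ x j = x i)).max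

/-- Baker's encoding of a parameterized string. -/
def encode {α : Type*} [DecidableEq α] {n : ℕ} (x : Fin n → α) (i : Fin n) : ℕ :=
  match prevOcc x i with
  | none => 0
  | some j => (i : ℕ) - (j : ℕ)

theorem single_discard_mem_of_first_mismatch {α : Type*} [Fintype α] [DecidableEq α]
    (n : ℕ) (x y : Fin n → α) (hne : encode x ≠ encode y) (i : Fin n)
    (hi : encode x i ≠ encode y i) (hleast : ∀ j : Fin n, j < i → encode x j = encode y j)
    (d : Fin n) (hd : ∃ π : Equiv.Perm α, ∀ j ∉ ({d} : Finset (Fin n)), π (x j) = y j) :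
    d = i ∨ prevOcc x i = (d : WithBot (Fin n)) ∨ prevOcc y i = (d : WithBot (Fin n)) := by
  by_contra hcon
  push_neg at hcon
  obtain ⟨hd1, hd2, hd3⟩ := hcon
  obtain ⟨π, hπ⟩ := hd
  apply hi
  have hπi : π (x i) = y i := hπ i (by simp [Ne.symm hd1])
  have key : ∀ j : Fin n, j ≠ d → (x j = x i ↔ y j = y i) := by
    intro j hj
    have h1 : π (x j) = y j := hπ j (by simp [hj])
    constructor
    · intro h; rw [← h1, ← hπi, h]
    · intro h
      have : π (x j) = π (x i) := by rw [h1, hπi, h]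
      exact π.injective this
  have hSxSy : ∀ j : Fin n, j ≠ d →
      ((j ∈ Finset.univ.filter (fun j : Fin n => j < i ∧ x j = x i)) ↔
       (j ∈ Finset.univ.filter (fun j : Fin n => j < i ∧ y j = y i))) := by
    intro j hj
    simp only [Finset.mem_filter, Finset.mem_univ, true_and]
    exact and_congr_right (fun _ => key j hj)
  show encode x i = encode y i
  unfold encode prevOcc
  rcases hx : (Finset.univ.filter (fun j : Fin n => j < i ∧ x j = x i)).max with _ | j
  · rcases hy : (Finset.univ.filter (fun j : Fin n => j < i ∧ y j = y i)).max with _ | k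
    · rfl
    · exfalso
      have hk : k ∈ Finset.univ.filter (fun j : Fin n => j < i ∧ y j = y i) :=
        Finset.mem_of_max hy
      have hkd : k ≠ d := by
        rintro rfl
        exact hd3 (by rw [prevOcc, hy]; rfl)
      have hkx : k ∈ Finset.univ.filter (fun j : Fin n => j < i ∧ x j = x i) :=
        (hSxSy k hkd).mpr hk
      have := Finset.le_max hkx
      rw [hx] at this
      exact absurd this (WithBot.not_coe_le_bot _)
  · have hj : j ∈ Finset.univ.filter (fun j : Fin n => j < i ∧ x j = x i) :=
      Finset.mem_of_max hx
    have hjd : j ≠ d := by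
      rintro rfl
      exact hd2 (by rw [prevOcc, hx]; rfl)
    have hjy : j ∈ Finset.univ.filter (fun j : Fin n => j < i ∧ y j = y i) :=
      (hSxSy j hjd).mp hj
    rcases hy : (Finset.univ.filter (fun j : Fin n => j < i ∧ y j = y i)).max with _ | k
    · exfalso
      have := Finset.le_max hjy
      rw [hy] at this
      exact absurd this (WithBot.not_coe_le_bot _)
    · have hk : k ∈ Finset.univ.filter (fun j : Fin n => j < i ∧ y j = y i) :=
        Finset.mem_of_max hy
      have hkd : k ≠ d := by
        rintro rfl
        exact hd3 (by rw [prevOcc, hy]; rfl)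
      have hkx : k ∈ Finset.univ.filter (fun j : Fin n => j < i ∧ x j = x i) :=
        (hSxSy k hkd).mpr hk
      have h1 := Finset.le_max hjy
      have h2 := Finset.le_max hkx
      rw [hy, WithBot.some_eq_coe] at h1
      rw [hx, WithBot.some_eq_coe] at h2
      have : j = k := le_antisymm (by exact_mod_cast h1) (by exact_mod_cast h2)
      rw [this]
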